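/- In the polynomial ring $S = k[x_0, \ldots, x_n]$ with $n \ge 2$ over a field $k$, the ideal $(x_0^2, x_0 x_1, x_1^2, x_0 x_2 - x_1 x_2)$ equals the intersection $(x_0 - x_1, x_0^2) \cap (x_0, x_1, x_2)^2$. -/

import Mathlib

open MvPolynomial

/-- in `S = k[x₀,…,xₙ]` with `n ≥ 2`, the ideal
`(x₀², x₀x₁, x₁², x₀x₂ - x₁x₂)` equals `(x₀ - x₁, x₀²) ∩ (x₀, x₁, x₂)²`. -/
theorem stmt_4 (k : Type*) [Field k] (n : ℕ) (hn : 2 ≤ n) :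
    (Ideal.span {X (⟨0, by omega⟩ : Fin (n + 1)) ^ 2,
        X (⟨0, by omega⟩ : Fin (n + 1)) * X ⟨1, by omega⟩,
        X (⟨1, by omega⟩ : Fin (n + 1)) ^ 2,
        X (⟨0, by omega⟩ : Fin (n + 1)) * X ⟨2, by omega⟩
          - X (⟨1, by omega⟩ : Fin (n + 1)) * X ⟨2, by omega⟩} :
      Ideal (MvPolynomial (Fin (n + 1)) k))
      = Ideal.span {X ⟨0, by omega⟩ - X ⟨1, by omega⟩, X (⟨0, by omega⟩ : Fin (n + 1)) ^ 2}
          ⊓ (Ideal.span {X ⟨0, by omega⟩, X ⟨1, by omega⟩, X ⟨2, by omega⟩}) ^ 2 := by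
  set A := MvPolynomial (Fin (n + 1)) k
  set a : A := X ⟨0, by omega⟩ with ha
  set b : A := X ⟨1, by omega⟩ with hb
  set c : A := X ⟨2, by omega⟩ with hc
  set L : Ideal A := Ideal.span {a ^ 2, a * b, b ^ 2, a * c - b * c} with hL
  set P : Ideal A := Ideal.span {a, b, c} with hP
  have haP : a ∈ P := Ideal.subset_span (by simp)
  have hbP : b ∈ P := Ideal.subset_span (by simp)
  have hcP : c ∈ P := Ideal.subset_span (by simp)
  have hP2 : P ^ 2 = P * P := sq P
  -- generators of L
  have g1 : a ^ 2 ∈ L := Ideal.subset_span (by simp)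
  have g2 : a * b ∈ L := Ideal.subset_span (by simp)
  have g3 : b ^ 2 ∈ L := Ideal.subset_span (by simp)
  have g4 : a * c - b * c ∈ L := Ideal.subset_span (by simp)
  -- key: (a-b) * P ≤ L
  have hmul : Ideal.span {a - b} * P ≤ L := by
    rw [hP, Ideal.span_mul_span']
    rw [Ideal.span_le]
    rintro x hx
    simp only [Set.mem_mul, Set.mem_singleton_iff, Set.mem_insert_iff] at hx
    obtain ⟨u, hu, v, hv, rfl⟩ := hx
    subst hu
    rcases hv with rfl | rfl | rfl
    · have : (a - b) * a = a ^ 2 - a * b := by ring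
      rw [this]; exact sub_mem g1 g2
    · have : (a - b) * b = a * b - b ^ 2 := by ring
      rw [this]; exact sub_mem g2 g3
    · have : (a - b) * c = a * c - b * c := by ring
      rw [this]; exact g4
  ext f
  constructor
  · intro hf
    refine Ideal.span_le.mpr ?_ hf
    rintro x hx
    simp only [Set.mem_insert_iff, Set.mem_singleton_iff] at hx
    constructor
    · rcases hx with rfl | rfl | rfl | rfl
      · exact Ideal.subset_span (by simp)
      · rw [SetLike.mem_coe, Ideal.mem_span_pair]
        exact ⟨-a, 1, by ring⟩
      · rw [SetLike.mem_coe, Ideal.mem_span_pair]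
        exact ⟨-(a + b), 1, by ring⟩
      · rw [SetLike.mem_coe, Ideal.mem_span_pair]
        exact ⟨c, 0, by ring⟩
    · rw [hP2]
      rcases hx with rfl | rfl | rfl | rfl
      · rw [sq]; exact Ideal.mul_mem_mul haP haP
      · exact Ideal.mul_mem_mul haP hbP
      · rw [sq]; exact Ideal.mul_mem_mul hbP hbP
      · exact sub_mem (Ideal.mul_mem_mul haP hcP) (Ideal.mul_mem_mul hbP hcP)
  · rintro ⟨hf1, hf2⟩
    rw [SetLike.mem_coe, Ideal.mem_span_pair] at hf1
    obtain ⟨g, h, hgh⟩ := hf1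
    have hha : h * a ^ 2 ∈ L := L.mul_mem_left h g1
    have hgab : g * (a - b) ∈ P ^ 2 := by
      have : g * (a - b) = f - h * a ^ 2 := by rw [← hgh]; ring
      rw [this]
      exact sub_mem (SetLike.mem_coe.mp hf2) ((P ^ 2).mul_mem_left h (Ideal.pow_mem_pow haP 2))
    -- decomposition: g = g₀ + g₁ with g₁ ∈ P and g₀ with no x0,x1,x2
    set ν : Fin (n + 1) → A := fun i => if i.val ≤ 2 then 0 else X i with hν
    have hdecomp : ∀ p : A, p - aeval ν p ∈ P := by
      intro p
      induction p using MvPolynomial.induction_on with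
      | C r => rw [aeval_C, algebraMap_eq, sub_self]; exact P.zero_mem
      | add p q hp hq =>
        rw [map_add]
        have : p + q - (aeval ν p + aeval ν q) = (p - aeval ν p) + (q - aeval ν q) := by ring
        rw [this]; exact add_mem hp hq
      | mul_X p i hp =>
        rw [map_mul, aeval_X]
        by_cases hi : i.val ≤ 2
        · rw [hν]
          simp only [hi, if_true, mul_zero, sub_zero]
          have hXi : X i ∈ P := by
            have : i = (⟨0, by omega⟩ : Fin (n+1)) ∨ i = ⟨1, by omega⟩ ∨ i = ⟨2, by omega⟩ := by
              have := i.isLt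
              rcases Nat.lt_or_ge i.val 1 with h1 | h1
              · left; exact Fin.ext (by simp only [Fin.val_mk]; omega)
              rcases Nat.lt_or_ge i.val 2 with h2 | h2
              · right; left; exact Fin.ext (by simp only [Fin.val_mk]; omega)
              · right; right; exact Fin.ext (by simp only [Fin.val_mk]; omega)
            rcases this with h | h | h <;> rw [h]
            · exact haP
            · exact hbP
            · exact hcP
          exact P.mul_mem_left p hXi
        · rw [hν]
          simp only [hi, if_false]
          have : p * X i - aeval ν p * X i = (p - aeval ν p) * X i := by ring
          rw [hν] at this
          rw [this]
          exact P.mul_mem_right _ hp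
    set g₀ : A := aeval ν g with hg₀
    have hg₁ : g - g₀ ∈ P := hdecomp g
    -- g₀ * (a - b) ∈ P ^ 2
    have hg₀ab : g₀ * (a - b) ∈ P ^ 2 := by
      have : g₀ * (a - b) = g * (a - b) - (g - g₀) * (a - b) := by ring
      rw [this]
      refine sub_mem hgab ?_
      rw [hP2]
      exact Ideal.mul_mem_mul hg₁ (sub_mem haP hbP)
    -- apply π : x1, x2 ↦ 0
    set μ : Fin (n + 1) → A := fun i => if i.val = 1 ∨ i.val = 2 then 0 else X i with hμ
    set π : A →ₐ[k] A := aeval μ with hπ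
    have hπa : π a = a := by rw [hπ, ha, aeval_X, hμ]; norm_num
    have hπb : π b = 0 := by rw [hπ, hb, aeval_X, hμ]; norm_num
    have hπc : π c = 0 := by rw [hπ, hc, aeval_X, hμ]; norm_num
    have hπg₀ : π g₀ = g₀ := by
      rw [hg₀, hπ, comp_aeval_apply]
      have hfun : (fun i => (aeval μ : A →ₐ[k] A) (ν i)) = ν := by
        funext i
        rw [hν]
        by_cases hi : i.val ≤ 2
        · simp [hi]
        · simp only [hi, if_false, aeval_X, hμ]
          have h12 : ¬(i.val = 1 ∨ i.val = 2) := by omega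
          simp [h12]
      rw [hfun]
    have hmap : g₀ * a ∈ Ideal.span {a ^ 2} := by
      have h1 : π (g₀ * (a - b)) ∈ Ideal.map (π : A →+* A) (P ^ 2) :=
        Ideal.mem_map_of_mem _ hg₀ab
      have h2 : Ideal.map (π : A →+* A) (P ^ 2) = (Ideal.map (π : A →+* A) P) ^ 2 :=
        Ideal.map_pow _ _ _
      have h3 : Ideal.map (π : A →+* A) P = Ideal.span {a} := by
        rw [hP, Ideal.map_span]
        have : (π : A →+* A) '' {a, b, c} = {a, 0, 0} := by
          simp only [Set.image_insert_eq, Set.image_singleton]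
          rw [show (π : A →+* A) a = a from hπa, show (π : A →+* A) b = 0 from hπb,
            show (π : A →+* A) c = 0 from hπc]
        rw [this]
        refine le_antisymm (Ideal.span_le.mpr ?_) (Ideal.span_le.mpr ?_)
        · rintro x hx
          simp only [Set.mem_insert_iff, Set.mem_singleton_iff] at hx
          rcases hx with rfl | rfl | rfl
          · exact Ideal.subset_span rfl
          · exact zero_mem _
          · exact zero_mem _
        · rintro x hx
          simp only [Set.mem_singleton_iff] at hx
          subst hx
          exact Ideal.subset_span (by simp)
      rw [h2, h3, Ideal.span_singleton_pow] at h1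
      have : π (g₀ * (a - b)) = g₀ * a := by
        rw [map_mul, map_sub, hπa, hπb, hπg₀, sub_zero]
      rwa [this] at h1
    -- cancel: g₀ * a = q * a^2 → g₀ = q * a
    rw [Ideal.mem_span_singleton'] at hmap
    obtain ⟨q, hq⟩ := hmap
    have hg₀qa : g₀ = q * a := by
      have ha0 : a ≠ 0 := X_ne_zero _
      have : g₀ * a = (q * a) * a := by rw [← hq]; ring
      exact mul_right_cancel₀ ha0 this
    -- now apply ρ : x0 ↦ 0
    set ρ : A →ₐ[k] A := aeval (fun i : Fin (n+1) => if i.val = 0 then 0 else X i) with hρ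
    have hρg₀ : ρ g₀ = g₀ := by
      rw [hg₀, hρ, comp_aeval_apply]
      have hfun : (fun i => (aeval (fun j : Fin (n+1) => if j.val = 0 then 0 else X j) : A →ₐ[k] A) (ν i)) = ν := by
        funext i
        rw [hν]
        by_cases hi : i.val ≤ 2
        · simp [hi]
        · have h0 : ¬ i.val = 0 := by omega
          simp [hi, h0]
          intro h; subst h; simp at h0
      rw [hfun]
    have hρa : ρ a = 0 := by rw [hρ, ha, aeval_X]; norm_num
    have hg₀0 : g₀ = 0 := by
      have := congrArg ρ hg₀qa
      rw [hρg₀, map_mul, hρa, mul_zero] at this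
      exact this
    have hgP : g ∈ P := by
      have := hg₁
      rw [hg₀0, sub_zero] at this
      exact this
    -- conclude
    have : f = g * (a - b) + h * a ^ 2 := hgh.symm
    rw [this]
    refine add_mem ?_ hha
    refine hmul ?_
    rw [mul_comm]
    exact Ideal.mul_mem_mul hgP (Ideal.subset_span rfl)
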